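/- arXiv:math/0009055 — 2 statements merged into one kernel-verified Lean document; each statement's English description precedes it below -/
import Mathlib

section
/- If $N$ is a normal subgroup of $G$ contained in $\ker\xi$, then the map $\varepsilon: \widehat{RG}_\xi \to \widehat{R(G/N)}_{\bar\xi}$ defined by $\varepsilon(\lambda)(gN) = \sum_{n \in N} \lambda(gn)$ is a well-defined surjective ring homomorphism, where $\bar\xi: G/N \to \mathbb{R}$ is induced by $\xi$. -/
noncomputable section
open scoped Classical

/-- Novikov finiteness condition. -/
def NovCond {G R : Type*} [Group G] [Ring R] (ξ : G → ℝ) (l : G → R) : Prop :=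
  ∀ r : ℝ, {g : G | l g ≠ 0 ∧ r ≤ ξ g}.Finite

/-- Convolution product. -/
def conv {G R : Type*} [Group G] [Ring R] (l₁ l₂ : G → R) : G → R :=
  fun g => ∑ᶠ h : G, l₁ h * l₂ (h⁻¹ * g)

/-- `ε(λ)(gN) = ∑_{n ∈ N} λ(gn)`. -/
def epsQuot {G R : Type*} [Group G] [Ring R] (N : Subgroup G) (l : G → R) :
    G ⧸ N → R :=
  fun q => ∑ᶠ n : N, l (q.out * (n : G))

/-- The homomorphism `G/N → ℝ` induced by `ξ`. -/
def xiBar {G : Type*} [Group G] (ξ : G → ℝ) (N : Subgroup G) : G ⧸ N → ℝ :=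
  fun q => ξ q.out

section Aux

variable {G R : Type*} [Group G] [Ring R]

lemma NovAux.pairFinite {A B : Type*} {ξ₁ : A → ℝ} {ξ₂ : B → ℝ} {f : A → R} {g : B → R}
    (h₁ : ∀ r : ℝ, {a : A | f a ≠ 0 ∧ r ≤ ξ₁ a}.Finite)
    (h₂ : ∀ r : ℝ, {b : B | g b ≠ 0 ∧ r ≤ ξ₂ b}.Finite) (c : ℝ) :
    {p : A × B | f p.1 ≠ 0 ∧ g p.2 ≠ 0 ∧ c ≤ ξ₁ p.1 + ξ₂ p.2}.Finite := by
  have hA : (⋃ a ∈ {a : A | f a ≠ 0 ∧ c / 2 ≤ ξ₁ a},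
      ({a} ×ˢ {b : B | g b ≠ 0 ∧ c - ξ₁ a ≤ ξ₂ b})).Finite :=
    Set.Finite.biUnion (h₁ (c / 2)) (fun a _ => (Set.finite_singleton a).prod (h₂ _))
  have hB : (⋃ b ∈ {b : B | g b ≠ 0 ∧ c / 2 ≤ ξ₂ b},
      ({a : A | f a ≠ 0 ∧ c - ξ₂ b ≤ ξ₁ a} ×ˢ {b})).Finite :=
    Set.Finite.biUnion (h₂ (c / 2)) (fun b _ => (h₁ _).prod (Set.finite_singleton b))
  refine (hA.union hB).subset ?_
  rintro ⟨a, b⟩ ⟨hf, hg, hc⟩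
  rcases le_or_gt (c / 2) (ξ₁ a) with h | h
  · exact Or.inl (Set.mem_biUnion ⟨hf, h⟩ ⟨rfl, hg, by linarith⟩)
  · exact Or.inr (Set.mem_biUnion ⟨hg, by linarith⟩ ⟨⟨hf, by linarith⟩, rfl⟩)

lemma NovAux.fiberFinite {ξ : G → ℝ} (hξ : ∀ a b : G, ξ (a * b) = ξ a + ξ b)
    {N : Subgroup G} (hN : ∀ n ∈ N, ξ n = 0) {l : G → R} (hl : NovCond ξ l) (g : G) :
    {n : N | l (g * (n : G)) ≠ 0}.Finite := by
  have hinj : Set.InjOn (fun n : N => g * (n : G))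
      ((fun n : N => g * (n : G)) ⁻¹' {h : G | l h ≠ 0 ∧ ξ g ≤ ξ h}) :=
    fun x _ y _ h => Subtype.ext (mul_left_cancel h)
  refine ((hl (ξ g)).preimage hinj).subset ?_
  intro n hn
  simp only [Set.mem_preimage, Set.mem_setOf_eq]
  exact ⟨hn, by rw [hξ, hN n n.2, add_zero]⟩

lemma NovAux.convSuppFinite {ξ : G → ℝ} (hξ : ∀ a b : G, ξ (a * b) = ξ a + ξ b)
    {l₁ l₂ : G → R} (h₁ : NovCond ξ l₁) (h₂ : NovCond ξ l₂) (g : G) :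
    {h : G | l₁ h * l₂ (h⁻¹ * g) ≠ 0}.Finite := by
  have hp := NovAux.pairFinite (R := R) h₁ h₂ (ξ g)
  have hinj : Set.InjOn (fun h : G => (h, h⁻¹ * g))
      ((fun h : G => (h, h⁻¹ * g)) ⁻¹'
        {p : G × G | l₁ p.1 ≠ 0 ∧ l₂ p.2 ≠ 0 ∧ ξ g ≤ ξ p.1 + ξ p.2}) :=
    fun x _ y _ h => congrArg Prod.fst h
  refine (hp.preimage hinj).subset ?_
  intro h hh
  have hsum : ξ h + ξ (h⁻¹ * g) = ξ g := by
    rw [← hξ, mul_inv_cancel_left]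
  exact ⟨left_ne_zero_of_mul hh, right_ne_zero_of_mul hh, le_of_eq hsum.symm⟩

lemma NovAux.epsQuot_mk (N : Subgroup G) (l : G → R) (g : G) :
    epsQuot N l (QuotientGroup.mk g) = ∑ᶠ n : N, l (g * (n : G)) := by
  obtain ⟨n₀, hn₀⟩ := QuotientGroup.mk_out_eq_mul N g
  show ∑ᶠ n : N, l ((QuotientGroup.mk g : G ⧸ N).out * (n : G)) = _
  rw [hn₀]
  calc ∑ᶠ n : N, l (g * (n₀ : G) * (n : G))
      = ∑ᶠ n : N, (fun k : N => l (g * (k : G))) (Equiv.mulLeft n₀ n) := by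
        refine finsum_congr fun n => ?_
        simp [mul_assoc]
    _ = ∑ᶠ k : N, l (g * (k : G)) :=
        finsum_comp_equiv (Equiv.mulLeft n₀) (f := fun k : N => l (g * (k : G)))

/-- The bijection `(G/N) × N ≃ G`, `(p, m) ↦ p.out * m`. -/
def NovAux.cosetEquiv (N : Subgroup G) [N.Normal] : (G ⧸ N) × N ≃ G where
  toFun pm := pm.1.out * (pm.2 : G)
  invFun g := (QuotientGroup.mk g,
    ⟨((QuotientGroup.mk g : G ⧸ N).out)⁻¹ * g,
      QuotientGroup.eq.mp (QuotientGroup.out_eq' (QuotientGroup.mk g))⟩)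
  left_inv := by
    rintro ⟨p, m⟩
    have h1 : QuotientGroup.mk (p.out * (m : G)) = p := by
      rw [QuotientGroup.mk_mul, QuotientGroup.out_eq',
        (QuotientGroup.eq_one_iff _).mpr m.2, mul_one]
    refine Prod.ext h1 (Subtype.ext ?_)
    show ((QuotientGroup.mk (p.out * (m : G)) : G ⧸ N).out)⁻¹ * (p.out * (m : G)) = (m : G)
    rw [h1, inv_mul_cancel_left]
  right_inv := fun g => by simp

end Aux

/-- For a normal subgroup `N ⊆ ker ξ`, the map `ε : R̂G_ξ → R̂(G/N)_ξ̄`,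
`ε(λ)(gN) = ∑_{n∈N} λ(gn)`, is well defined (the sums are finite and the result
satisfies the Novikov condition for the induced homomorphism `ξ̄`), and is a
surjective ring homomorphism. -/
theorem eps_quotient_ring_hom
    {G R : Type*} [Group G] [Ring R] (ξ : G → ℝ)
    (hξ : ∀ a b : G, ξ (a * b) = ξ a + ξ b)
    (N : Subgroup G) [N.Normal] (hN : ∀ n ∈ N, ξ n = 0) :
    (∀ g : G, xiBar ξ N (QuotientGroup.mk g) = ξ g) ∧
    (∀ a b : G ⧸ N, xiBar ξ N (a * b) = xiBar ξ N a + xiBar ξ N b) ∧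
    (∀ (l : G → R), NovCond ξ l →
      ∀ q : G ⧸ N, {n : N | l (q.out * (n : G)) ≠ 0}.Finite) ∧
    (∀ (l : G → R), NovCond ξ l → NovCond (xiBar ξ N) (epsQuot N l)) ∧
    (∀ (l₁ l₂ : G → R), NovCond ξ l₁ → NovCond ξ l₂ →
      epsQuot N (l₁ + l₂) = epsQuot N l₁ + epsQuot N l₂) ∧
    (∀ (l₁ l₂ : G → R), NovCond ξ l₁ → NovCond ξ l₂ →
      epsQuot N (conv l₁ l₂) = conv (epsQuot N l₁) (epsQuot N l₂)) ∧
    (epsQuot N (fun g : G => if g = 1 then (1 : R) else 0) =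
      fun q : G ⧸ N => if q = 1 then (1 : R) else 0) ∧
    (∀ m : G ⧸ N → R, NovCond (xiBar ξ N) m →
      ∃ l : G → R, NovCond ξ l ∧ epsQuot N l = m) := by
  -- `ξ̄ ∘ mk = ξ`
  have hbar1 : ∀ g : G, xiBar ξ N (QuotientGroup.mk g) = ξ g := by
    intro g
    obtain ⟨n, hn⟩ := QuotientGroup.mk_out_eq_mul N g
    show ξ (QuotientGroup.mk g : G ⧸ N).out = ξ g
    rw [hn, hξ, hN n n.2, add_zero]
  -- `ξ̄` additive
  have hbar2 : ∀ a b : G ⧸ N, xiBar ξ N (a * b) = xiBar ξ N a + xiBar ξ N b := by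
    intro a b
    conv_lhs => rw [← QuotientGroup.out_eq' a, ← QuotientGroup.out_eq' b,
      ← QuotientGroup.mk_mul, hbar1]
    rw [hξ]
    conv_rhs => rw [← QuotientGroup.out_eq' a, ← QuotientGroup.out_eq' b, hbar1, hbar1]
  -- fiber finiteness
  have h3 : ∀ (l : G → R), NovCond ξ l →
      ∀ q : G ⧸ N, {n : N | l (q.out * (n : G)) ≠ 0}.Finite :=
    fun l hl q => NovAux.fiberFinite hξ hN hl q.out
  -- Novikov condition for `ε l`
  have h4 : ∀ (l : G → R), NovCond ξ l → NovCond (xiBar ξ N) (epsQuot N l) := by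
    intro l hl r
    refine ((hl r).image QuotientGroup.mk).subset ?_
    rintro q ⟨hne, hr⟩
    obtain ⟨n, hn⟩ : ∃ n : N, l (q.out * (n : G)) ≠ 0 := by
      by_contra h
      push_neg at h
      exact hne (finsum_eq_zero_of_forall_eq_zero h)
    refine ⟨q.out * (n : G), ⟨hn, ?_⟩, ?_⟩
    · show r ≤ ξ (q.out * (n : G))
      rw [hξ, hN n n.2, add_zero]
      exact hr
    · rw [QuotientGroup.mk_mul, QuotientGroup.out_eq',
        (QuotientGroup.eq_one_iff _).mpr n.2, mul_one]
  -- additivity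
  have h5 : ∀ (l₁ l₂ : G → R), NovCond ξ l₁ → NovCond ξ l₂ →
      epsQuot N (l₁ + l₂) = epsQuot N l₁ + epsQuot N l₂ := by
    intro l₁ l₂ hl₁ hl₂
    funext q
    show ∑ᶠ n : N, (l₁ (q.out * (n : G)) + l₂ (q.out * (n : G))) = _
    rw [finsum_add_distrib ((h3 l₁ hl₁ q).subset (fun n hn => hn))
      ((h3 l₂ hl₂ q).subset (fun n hn => hn))]
    rfl
  -- multiplicativity
  have h6 : ∀ (l₁ l₂ : G → R), NovCond ξ l₁ → NovCond ξ l₂ →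
      epsQuot N (conv l₁ l₂) = conv (epsQuot N l₁) (epsQuot N l₂) := by
    intro l₁ l₂ hl₁ hl₂
    funext q
    set f : G → R := fun h => l₁ h * epsQuot N l₂ ((QuotientGroup.mk h)⁻¹ * q) with hfdef
    set F : N × G → R := fun p => l₁ p.2 * l₂ (p.2⁻¹ * (q.out * (p.1 : G))) with hFdef
    -- support of F is finite
    have hFsupp : (Function.support F).Finite := by
      have hp := NovAux.pairFinite (R := R) hl₁ hl₂ (ξ q.out)
      have hinj : Set.InjOn (fun p : N × G => (p.2, p.2⁻¹ * (q.out * (p.1 : G))))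
          ((fun p : N × G => (p.2, p.2⁻¹ * (q.out * (p.1 : G)))) ⁻¹'
            {p : G × G | l₁ p.1 ≠ 0 ∧ l₂ p.2 ≠ 0 ∧ ξ q.out ≤ ξ p.1 + ξ p.2}) := by
        rintro ⟨n₁, a₁⟩ _ ⟨n₂, a₂⟩ _ h
        have h1 : a₁ = a₂ := congrArg Prod.fst h
        have h2 : a₁⁻¹ * (q.out * (n₁ : G)) = a₂⁻¹ * (q.out * (n₂ : G)) := congrArg Prod.snd h
        rw [h1] at h2
        have h3 : (n₁ : G) = (n₂ : G) := by
          have := mul_left_cancel h2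
          exact mul_left_cancel this
        exact Prod.ext (Subtype.ext h3) h1
      refine (hp.preimage hinj).subset ?_
      rintro ⟨n, h⟩ hh
      have hne : l₁ h * l₂ (h⁻¹ * (q.out * (n : G))) ≠ 0 := hh
      have hsum : ξ h + ξ (h⁻¹ * (q.out * (n : G))) = ξ q.out := by
        rw [← hξ, mul_inv_cancel_left, hξ, hN n n.2, add_zero]
      exact ⟨left_ne_zero_of_mul hne, right_ne_zero_of_mul hne, le_of_eq hsum.symm⟩
    -- support of f is finite
    have hfsupp : (Function.support f).Finite := by
      have hp := NovAux.pairFinite (R := R) hl₁ (h4 l₂ hl₂) ((xiBar ξ N) q)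
      have hinj : Set.InjOn (fun h : G => (h, (QuotientGroup.mk h : G ⧸ N)⁻¹ * q))
          ((fun h : G => (h, (QuotientGroup.mk h : G ⧸ N)⁻¹ * q)) ⁻¹'
            {p : G × (G ⧸ N) | l₁ p.1 ≠ 0 ∧ epsQuot N l₂ p.2 ≠ 0 ∧
              xiBar ξ N q ≤ ξ p.1 + xiBar ξ N p.2}) :=
        fun x _ y _ h => congrArg Prod.fst h
      refine (hp.preimage hinj).subset ?_
      intro h hh
      have hne : l₁ h * epsQuot N l₂ ((QuotientGroup.mk h)⁻¹ * q) ≠ 0 := hh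
      have hsum : ξ h + xiBar ξ N ((QuotientGroup.mk h)⁻¹ * q) = xiBar ξ N q := by
        rw [← hbar1 h, ← hbar2, mul_inv_cancel_left]
      exact ⟨left_ne_zero_of_mul hne, right_ne_zero_of_mul hne, le_of_eq hsum.symm⟩
    -- LHS = ∑ᶠ h, f h
    have hL : epsQuot N (conv l₁ l₂) q = ∑ᶠ h : G, f h := by
      have hswap : (Function.support fun p : G × N => F ((Equiv.prodComm G N) p)).Finite := by
        refine (hFsupp.preimage ((Equiv.prodComm G N).injective.injOn)).subset ?_
        intro p hp
        exact hp
      calc epsQuot N (conv l₁ l₂) q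
          = ∑ᶠ n : N, ∑ᶠ h : G, F (n, h) := rfl
        _ = ∑ᶠ p : N × G, F p := (finsum_curry F hFsupp).symm
        _ = ∑ᶠ p : G × N, F ((Equiv.prodComm G N) p) :=
            (finsum_comp_equiv (Equiv.prodComm G N)).symm
        _ = ∑ᶠ h : G, ∑ᶠ n : N, F (n, h) :=
            finsum_curry (fun p : G × N => F ((Equiv.prodComm G N) p)) hswap
        _ = ∑ᶠ h : G, f h := by
            refine finsum_congr fun h => ?_
            have hmk : (QuotientGroup.mk (h⁻¹ * q.out) : G ⧸ N) = (QuotientGroup.mk h)⁻¹ * q := by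
              rw [QuotientGroup.mk_mul, QuotientGroup.mk_inv, QuotientGroup.out_eq']
            calc ∑ᶠ n : N, l₁ h * l₂ (h⁻¹ * (q.out * (n : G)))
                = ∑ᶠ n : N, l₁ h * l₂ ((h⁻¹ * q.out) * (n : G)) := by
                  refine finsum_congr fun n => ?_
                  rw [mul_assoc]
              _ = l₁ h * ∑ᶠ n : N, l₂ ((h⁻¹ * q.out) * (n : G)) :=
                  (mul_finsum' _ _ ((NovAux.fiberFinite hξ hN hl₂ (h⁻¹ * q.out)).subset
                    (fun n hn => hn))).symm
              _ = l₁ h * epsQuot N l₂ ((QuotientGroup.mk h)⁻¹ * q) := by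
                  rw [← NovAux.epsQuot_mk, hmk]
    -- RHS = ∑ᶠ h, f h
    have hR : conv (epsQuot N l₁) (epsQuot N l₂) q = ∑ᶠ h : G, f h := by
      have hcomp : (Function.support fun pm : (G ⧸ N) × N => f ((NovAux.cosetEquiv N) pm)).Finite := by
        refine (hfsupp.preimage ((NovAux.cosetEquiv N).injective.injOn)).subset ?_
        intro p hp
        exact hp
      calc conv (epsQuot N l₁) (epsQuot N l₂) q
          = ∑ᶠ p : G ⧸ N, (∑ᶠ m : N, l₁ (p.out * (m : G))) * epsQuot N l₂ (p⁻¹ * q) := rfl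
        _ = ∑ᶠ p : G ⧸ N, ∑ᶠ m : N, l₁ (p.out * (m : G)) * epsQuot N l₂ (p⁻¹ * q) := by
            refine finsum_congr fun p => ?_
            exact finsum_mul' _ _ ((NovAux.fiberFinite hξ hN hl₁ p.out).subset (fun n hn => hn))
        _ = ∑ᶠ pm : (G ⧸ N) × N, f ((NovAux.cosetEquiv N) pm) := by
            rw [finsum_curry _ hcomp]
            refine finsum_congr fun p => finsum_congr fun m => ?_
            have h1 : (QuotientGroup.mk (p.out * (m : G)) : G ⧸ N) = p := by
              rw [QuotientGroup.mk_mul, QuotientGroup.out_eq',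
                (QuotientGroup.eq_one_iff _).mpr m.2, mul_one]
            show l₁ (p.out * (m : G)) * epsQuot N l₂ (p⁻¹ * q)
              = l₁ (p.out * (m : G)) *
                epsQuot N l₂ ((QuotientGroup.mk (p.out * (m : G)) : G ⧸ N)⁻¹ * q)
            rw [h1]
        _ = ∑ᶠ h : G, f h := finsum_comp_equiv (NovAux.cosetEquiv N)
    rw [hL, hR]
  -- unit
  have h7 : epsQuot N (fun g : G => if g = 1 then (1 : R) else 0) =
      fun q : G ⧸ N => if q = 1 then (1 : R) else 0 := by
    funext q
    by_cases hq : q = 1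
    · subst hq
      have h1 : ((1 : G ⧸ N).out) ∈ N :=
        (QuotientGroup.eq_one_iff _).mp (QuotientGroup.out_eq' 1)
      have hsingle := finsum_eq_single
        (fun n : N => if (1 : G ⧸ N).out * (n : G) = 1 then (1 : R) else 0)
        (⟨((1 : G ⧸ N).out)⁻¹, inv_mem h1⟩ : N) ?_
      · show (∑ᶠ n : N, if (1 : G ⧸ N).out * (n : G) = 1 then (1 : R) else 0) = _
        rw [hsingle]
        simp
      · intro x hx
        have : (1 : G ⧸ N).out * (x : G) ≠ 1 := fun hcontra =>
          hx (Subtype.ext (eq_inv_of_mul_eq_one_right hcontra))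
        simp [this]
    · have hall : ∀ n : N, (if q.out * (n : G) = 1 then (1 : R) else 0) = 0 := by
        intro n
        have : q.out * (n : G) ≠ 1 := by
          intro hcontra
          apply hq
          have hout : q.out = ((n : G))⁻¹ := eq_inv_of_mul_eq_one_left hcontra
          have : q.out ∈ N := hout ▸ inv_mem n.2
          rw [← QuotientGroup.out_eq' q]
          exact (QuotientGroup.eq_one_iff _).mpr this
        simp [this]
      show (∑ᶠ n : N, if q.out * (n : G) = 1 then (1 : R) else 0) = _
      rw [finsum_eq_zero_of_forall_eq_zero hall, if_neg hq]
  -- surjectivity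
  have h8 : ∀ m : G ⧸ N → R, NovCond (xiBar ξ N) m →
      ∃ l : G → R, NovCond ξ l ∧ epsQuot N l = m := by
    intro m hm
    refine ⟨fun g => if (QuotientGroup.mk g : G ⧸ N).out = g then m (QuotientGroup.mk g) else 0,
      ?_, ?_⟩
    · intro r
      refine ((hm r).image Quotient.out).subset ?_
      rintro g ⟨hne, hr⟩
      have hout : (QuotientGroup.mk g : G ⧸ N).out = g := by
        by_contra h
        exact hne (if_neg h)
      have hmne : m (QuotientGroup.mk g) ≠ 0 := by
        have hne' : (if (QuotientGroup.mk g : G ⧸ N).out = g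
            then m (QuotientGroup.mk g) else 0) ≠ 0 := hne
        rwa [if_pos hout] at hne'
      refine ⟨QuotientGroup.mk g, ⟨hmne, ?_⟩, hout⟩
      show r ≤ ξ (QuotientGroup.mk g : G ⧸ N).out
      rw [hout]
      exact hr
    · funext q
      have hsingle := finsum_eq_single
        (fun n : N => if (QuotientGroup.mk (q.out * (n : G)) : G ⧸ N).out = q.out * (n : G)
          then m (QuotientGroup.mk (q.out * (n : G))) else 0) (1 : N) ?_
      · show (∑ᶠ n : N, if (QuotientGroup.mk (q.out * (n : G)) : G ⧸ N).out = q.out * (n : G)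
          then m (QuotientGroup.mk (q.out * (n : G))) else 0) = m q
        rw [hsingle]
        have hq1 : (QuotientGroup.mk (q.out) : G ⧸ N) = q := QuotientGroup.out_eq' q
        simp only [Subgroup.coe_one, mul_one, hq1]
        simp
      · intro x hx
        have hmkx : (QuotientGroup.mk (q.out * (x : G)) : G ⧸ N) = q := by
          rw [QuotientGroup.mk_mul, QuotientGroup.out_eq',
            (QuotientGroup.eq_one_iff _).mpr x.2, mul_one]
        have : (QuotientGroup.mk (q.out * (x : G)) : G ⧸ N).out ≠ q.out * (x : G) := by
          rw [hmkx]
          intro hcontra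
          apply hx
          apply Subtype.ext
          show (x : G) = (1 : G)
          have h1 : q.out * (1 : G) = q.out * (x : G) := by rw [mul_one, ← hcontra]
          exact (mul_left_cancel h1).symm
        simp only [if_neg this]
  exact ⟨hbar1, hbar2, h3, h4, h5, h6, h7, h8⟩
end
end

section
/- Let $v$ be a vector field on a smooth manifold and $\omega$ a Morse form. Suppose (1) for every critical point $p$ of $\omega$ there is a neighborhood $U_p$ and a Riemannian metric $g_p$ on $U_p$ with $\omega_x(X) = g_p(X, v(x))$ for $x \in U_p$; and (2) $\omega_x(v(x)) > 0$ whenever $\omega_x \neq 0$. Then there exists a global Riemannian metric $g$ on $M$ with $\omega_x(X) = g(X, v(x))$ for all $x \in M$, $X \in T_xM$; i.e., $v$ is an $\omega$-gradient. -/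
set_option maxHeartbeats 400000

noncomputable section
open scoped Manifold

/-- A continuous bilinear form is symmetric and positive definite. -/
def PosDefSym {E : Type*} [NormedAddCommGroup E] [NormedSpace ℝ E]
    (b : E →L[ℝ] E →L[ℝ] ℝ) : Prop :=
  (∀ X Y : E, b X Y = b Y X) ∧ (∀ X : E, X ≠ 0 → 0 < b X X)

/-- A fixed background inner product on a finite-dimensional real normed space,
as a continuous bilinear form. -/
def bgForm (E : Type*) [NormedAddCommGroup E] [NormedSpace ℝ E] [FiniteDimensional ℝ E] :
    E →L[ℝ] E →L[ℝ] ℝ :=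
  (innerSL ℝ).bilinearComp (toEuclidean (E := E)).toContinuousLinearMap
    (toEuclidean (E := E)).toContinuousLinearMap

theorem bgForm_symm {E : Type*} [NormedAddCommGroup E] [NormedSpace ℝ E] [FiniteDimensional ℝ E]
    (X Y : E) : bgForm E X Y = bgForm E Y X := by
  simp only [bgForm, ContinuousLinearMap.bilinearComp_apply, ContinuousLinearEquiv.coe_coe,
    innerSL_apply_apply]
  exact real_inner_comm _ _

theorem bgForm_nonneg {E : Type*} [NormedAddCommGroup E] [NormedSpace ℝ E] [FiniteDimensional ℝ E]
    (X : E) : 0 ≤ bgForm E X X := by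
  simp only [bgForm, ContinuousLinearMap.bilinearComp_apply, ContinuousLinearEquiv.coe_coe,
    innerSL_apply_apply]
  exact real_inner_self_nonneg

theorem bgForm_pos {E : Type*} [NormedAddCommGroup E] [NormedSpace ℝ E] [FiniteDimensional ℝ E]
    (X : E) (hX : X ≠ 0) : 0 < bgForm E X X := by
  have h0 : toEuclidean (E := E) X ≠ 0 := by
    intro h
    exact hX (by simpa using congrArg (toEuclidean (E := E)).symm h)
  have h1 : (inner (𝕜 := ℝ) (toEuclidean (E := E) X) (toEuclidean (E := E) X)) ≠ 0 :=
    fun h => h0 (inner_self_eq_zero.1 h)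
  have h2 := bgForm_nonneg X
  simp only [bgForm, ContinuousLinearMap.bilinearComp_apply, ContinuousLinearEquiv.coe_coe,
    innerSL_apply_apply] at h2 ⊢
  exact lt_of_le_of_ne h2 (Ne.symm h1)

theorem smulRightL_apply'' {E : Type*} [NormedAddCommGroup E] [NormedSpace ℝ E]
    (φ k : E →L[ℝ] ℝ) (X Y : E) :
    ContinuousLinearMap.smulRightL ℝ E (E →L[ℝ] ℝ) φ k X Y = φ X * k Y := rfl

/-- Lemma (gradient recognition): let `ω` be a (Morse) 1-form and `v` a vector
field on a closed manifold `M`.  If (1) around every critical point of `ω`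
there is a neighbourhood carrying a Riemannian metric turning `v` into the
gradient of `ω`, and (2) `ω(v) > 0` wherever `ω ≠ 0`, then there is a global
Riemannian metric `g` with `ω_x(X) = g(X, v(x))` for all `x`, `X`; i.e. `v` is
an `ω`-gradient.  (Tangent spaces are identified with the model space `E`.) -/
theorem omega_gradient_of_local_conditions
    {E : Type*} [NormedAddCommGroup E] [NormedSpace ℝ E] [FiniteDimensional ℝ E]
    {H : Type*} [TopologicalSpace H] (I : ModelWithCorners ℝ E H)
    {M : Type*} [TopologicalSpace M] [ChartedSpace H M]
    [IsManifold I (⊤ : ℕ∞) M] [CompactSpace M] [T2Space M]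
    (ω : M → (E →L[ℝ] ℝ)) (v : M → E)
    (hω : ContMDiff I 𝓘(ℝ, E →L[ℝ] ℝ) (⊤ : ℕ∞) ω)
    (hv : ContMDiff I 𝓘(ℝ, E) (⊤ : ℕ∞) v)
    (h1 : ∀ p : M, ω p = 0 →
      ∃ U : Set M, IsOpen U ∧ p ∈ U ∧
        ∃ g : M → (E →L[ℝ] E →L[ℝ] ℝ),
          ContMDiffOn I 𝓘(ℝ, E →L[ℝ] E →L[ℝ] ℝ) (⊤ : ℕ∞) g U ∧
          ∀ x ∈ U, PosDefSym (g x) ∧ ∀ X : E, ω x X = g x X (v x))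
    (h2 : ∀ x : M, ω x ≠ 0 → 0 < ω x (v x)) :
    ∃ g : M → (E →L[ℝ] E →L[ℝ] ℝ),
      ContMDiff I 𝓘(ℝ, E →L[ℝ] E →L[ℝ] ℝ) (⊤ : ℕ∞) g ∧
      ∀ x : M, PosDefSym (g x) ∧ ∀ X : E, ω x X = g x X (v x) := by
  classical
  refine Exists.elim (exists_contMDiffMap_forall_mem_convex_of_local (n := ⊤)
      (t := fun x => {b : E →L[ℝ] E →L[ℝ] ℝ | PosDefSym b ∧ ∀ X : E, ω x X = b X (v x)}) I
      ?_ ?_) (fun g hg => ⟨⇑g, g.contMDiff, fun x => hg x⟩)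
  · -- convexity
    intro x b₁ hb₁ b₂ hb₂ a b ha hb hab
    refine ⟨⟨?_, ?_⟩, ?_⟩
    · intro X Y
      simp [hb₁.1.1 X Y, hb₂.1.1 X Y]
    · intro X hX
      have p1 := hb₁.1.2 X hX
      have p2 := hb₂.1.2 X hX
      simp only [ContinuousLinearMap.add_apply, ContinuousLinearMap.coe_smul',
        Pi.smul_apply, ContinuousLinearMap.smul_apply, smul_eq_mul]
      rcases ha.lt_or_eq with ha' | ha'
      · nlinarith [mul_pos ha' p1, mul_nonneg hb p2.le]
      · have hb1 : b = 1 := by linarith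
        have ha0 : a = 0 := ha'.symm
        rw [ha0, hb1]
        simpa using p2
    · intro X
      have e1 := hb₁.2 X
      have e2 := hb₂.2 X
      simp only [ContinuousLinearMap.add_apply, ContinuousLinearMap.coe_smul',
        Pi.smul_apply, ContinuousLinearMap.smul_apply, smul_eq_mul]
      rw [← e1, ← e2]
      linear_combination (ω x X) * hab.symm
  · -- local existence
    intro x
    by_cases hx : ω x = 0
    · obtain ⟨U, hUo, hxU, g, hgs, hgm⟩ := h1 x hx
      exact ⟨U, hUo.mem_nhds hxU, g, hgs, hgm⟩
    · set B : E →L[ℝ] E →L[ℝ] ℝ := bgForm E with hBdef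
      have Bsym : ∀ X Y : E, B X Y = B Y X := by rw [hBdef]; exact bgForm_symm
      have Bnn : ∀ X : E, 0 ≤ B X X := by rw [hBdef]; exact bgForm_nonneg
      have Bpos : ∀ X : E, X ≠ 0 → 0 < B X X := by rw [hBdef]; exact bgForm_pos
      set c : M → ℝ := fun y => (ω y (v y))⁻¹ with hc
      set ψ : M → (E →L[ℝ] ℝ) := fun y => B.flip (v y) with hψ
      set g : M → (E →L[ℝ] E →L[ℝ] ℝ) := fun y =>
        B - c y • (ContinuousLinearMap.smulRightL ℝ E (E →L[ℝ] ℝ) (ω y) (ψ y)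
          + ContinuousLinearMap.smulRightL ℝ E (E →L[ℝ] ℝ) (ψ y) (ω y))
        + (c y * c y * B (v y) (v y) + c y) •
            ContinuousLinearMap.smulRightL ℝ E (E →L[ℝ] ℝ) (ω y) (ω y) with hg
      set U : Set M := {y | 0 < ω y (v y)} with hU
      have hcont : Continuous fun y => ω y (v y) := (hω.clm_apply hv).continuous
      have hUo : IsOpen U := isOpen_lt continuous_const hcont
      have hxU : x ∈ U := h2 x hx
      refine ⟨U, hUo.mem_nhds hxU, g, ?_, ?_⟩
      · -- smoothness on U
        intro y hy
        have hy' : ω y (v y) ≠ 0 := ne_of_gt hy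
        have hwv : ContMDiffAt I 𝓘(ℝ) (⊤ : ℕ∞) (fun z => ω z (v z)) y :=
          (hω.clm_apply hv).contMDiffAt
        have hcA : ContMDiffAt I 𝓘(ℝ) (⊤ : ℕ∞) c y :=
          ContDiffAt.comp_contMDiffAt (f := fun z => ω z (v z)) (contDiffAt_inv ℝ hy') hwv
        have hψA : ContMDiffAt I 𝓘(ℝ, E →L[ℝ] ℝ) (⊤ : ℕ∞) ψ y :=
          (contMDiffAt_const (c := B.flip)).clm_apply hv.contMDiffAt
        have hsr1 : ContMDiffAt I 𝓘(ℝ, E →L[ℝ] E →L[ℝ] ℝ) (⊤ : ℕ∞)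
            (fun z => ContinuousLinearMap.smulRightL ℝ E (E →L[ℝ] ℝ) (ω z) (ψ z)) y :=
          ((contMDiffAt_const
            (c := ContinuousLinearMap.smulRightL ℝ E (E →L[ℝ] ℝ))).clm_apply
            hω.contMDiffAt).clm_apply hψA
        have hsr2 : ContMDiffAt I 𝓘(ℝ, E →L[ℝ] E →L[ℝ] ℝ) (⊤ : ℕ∞)
            (fun z => ContinuousLinearMap.smulRightL ℝ E (E →L[ℝ] ℝ) (ψ z) (ω z)) y :=
          ((contMDiffAt_const
            (c := ContinuousLinearMap.smulRightL ℝ E (E →L[ℝ] ℝ))).clm_apply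
            hψA).clm_apply hω.contMDiffAt
        have hsr3 : ContMDiffAt I 𝓘(ℝ, E →L[ℝ] E →L[ℝ] ℝ) (⊤ : ℕ∞)
            (fun z => ContinuousLinearMap.smulRightL ℝ E (E →L[ℝ] ℝ) (ω z) (ω z)) y :=
          ((contMDiffAt_const
            (c := ContinuousLinearMap.smulRightL ℝ E (E →L[ℝ] ℝ))).clm_apply
            hω.contMDiffAt).clm_apply hω.contMDiffAt
        have hBvv : ContMDiffAt I 𝓘(ℝ) (⊤ : ℕ∞) (fun z => B (v z) (v z)) y :=
          ((contMDiffAt_const (c := B)).clm_apply hv.contMDiffAt).clm_apply hv.contMDiffAt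
        have hcoef : ContMDiffAt I 𝓘(ℝ) (⊤ : ℕ∞) (fun z => c z * c z * B (v z) (v z) + c z) y :=
          (((hcA.mul hcA).mul hBvv).add hcA)
        exact (((contMDiffAt_const (c := B)).sub (hcA.smul (hsr1.add hsr2))).add
          (hcoef.smul hsr3)).contMDiffWithinAt
      · -- membership
        intro y hy
        have hy0 : (0:ℝ) < ω y (v y) := hy
        have hy' : ω y (v y) ≠ 0 := ne_of_gt hy0
        have hcy : c y * ω y (v y) = 1 := inv_mul_cancel₀ hy'
        have hcpos : 0 < c y := inv_pos.2 hy0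
        have gapp : ∀ X Y : E, g y X Y =
            B X Y - c y * (ω y X * B Y (v y) + B X (v y) * ω y Y)
              + (c y * c y * B (v y) (v y) + c y) * (ω y X * ω y Y) := by
          intro X Y
          simp only [hg, ContinuousLinearMap.add_apply, ContinuousLinearMap.sub_apply,
            ContinuousLinearMap.coe_smul', Pi.smul_apply, ContinuousLinearMap.smul_apply,
            smul_eq_mul, smulRightL_apply'', hψ, ContinuousLinearMap.flip_apply]
          try ring
        refine ⟨⟨?_, ?_⟩, ?_⟩
        · intro X Y
          rw [gapp, gapp, Bsym X Y]
          ring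
        · intro X hX
          have key : g y X X
              = B (X - (c y * ω y X) • v y) (X - (c y * ω y X) • v y)
                + c y * (ω y X * ω y X) := by
            rw [gapp]
            simp only [map_sub, map_smul, ContinuousLinearMap.sub_apply,
              ContinuousLinearMap.smul_apply, smul_eq_mul]
            rw [Bsym (v y) X]
            ring
          rw [key]
          rcases eq_or_ne (ω y X) 0 with h0 | h0
          · have hPX : X - (c y * ω y X) • v y = X := by simp [h0]
            rw [hPX, h0]
            simpa using Bpos X hX
          · have t1 := Bnn (X - (c y * ω y X) • v y)
            have t2 : 0 < c y * (ω y X * ω y X) :=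
              mul_pos hcpos (mul_self_pos.2 h0)
            linarith
        · intro X
          rw [gapp]
          linear_combination (B X (v y) - c y * ω y X * B (v y) (v y) - ω y X) * hcy
end
end
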